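/- Let C ∈ ℚⁿ be a vector with all entries ≤ 0. Then: (1) there exists a vector X ∈ ℤⁿ with all entries > 0 such that (AX)_k ≤ C_k for all k and X_1 < X_2, if and only if a^{(2)}_{1,2} < −a^{(2)}_{1,1}; (2) there exists such an X with X_2 < X_1 if and only if a^{(2)}_{1,2} < −a^{(2)}_{2,2}. -/

import Mathlib

/-- `A` is negative definite: `xᵀAx < 0` for every nonzero real vector `x`. -/
def NegDefQ {V : Type*} [Fintype V] (A : Matrix V V ℚ) : Prop :=
  ∀ x : V → ℝ, x ≠ 0 → ∑ i, ∑ j, x i * (A i j : ℝ) * x j < 0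

/-- Numerical Nash condition `NN_(i,j)`: for every rational vector `C` with nonpositive
entries there is an integer vector `X` with positive entries such that `(AX)_k ≤ C_k`
for all `k` and `X i < X j`. -/
def NashNN {V : Type*} [Fintype V] (A : Matrix V V ℚ) (i j : V) : Prop :=
  ∀ C : V → ℚ, (∀ k, C k ≤ 0) →
    ∃ X : V → ℤ, (∀ k, 0 < X k) ∧ (∀ k, ∑ t, A k t * (X t : ℚ) ≤ C k) ∧ X i < X j

/-- Condition `(NN)`: `NN_(i,j)` for every ordered pair of distinct indices. -/
def NashNNAll {V : Type*} [Fintype V] (A : Matrix V V ℚ) : Prop :=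
  ∀ i j : V, i ≠ j → NashNN A i j

/-- One step of Gauss elimination with pivot `p`. -/
def gaussStep (b : ℕ → ℕ → ℚ) (p : ℕ) : ℕ → ℕ → ℚ :=
  fun i j => b i j - b p i * b p j / b p p

/-- Iterated Gauss steps with pivots `n-1, n-2, …` (0-based). -/
def gaussIter (b : ℕ → ℕ → ℚ) (n : ℕ) : ℕ → ℕ → ℕ → ℚ
  | 0 => b
  | k + 1 => gaussStep (gaussIter b n k) (n - 1 - k)

/-- The entries of `A` as a function on `ℕ` (0-based), junk value `0` out of range. -/
def entries {n : ℕ} (A : Matrix (Fin n) (Fin n) ℚ) : ℕ → ℕ → ℚ :=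
  fun i j => if h : i < n ∧ j < n then A ⟨i, h.1⟩ ⟨j, h.2⟩ else 0

/-- `gaussSeq A l` is the Gauss sequence matrix `A^{(l)}` (0-based indices, so the
meaningful entries are those with indices `< l`; `gaussSeq A n = A`). -/
def gaussSeq {n : ℕ} (A : Matrix (Fin n) (Fin n) ℚ) (l : ℕ) : ℕ → ℕ → ℚ :=
  gaussIter (entries A) n (n - l)

/-- `CSum A l i = C(A)^{(l)}_{i+1} = ∑_{j=1}^{l} a^{(l)}_{i+1,j}` (0-based `i < l`). -/
def CSum {n : ℕ} (A : Matrix (Fin n) (Fin n) ℚ) (l i : ℕ) : ℚ :=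
  ∑ j ∈ Finset.range l, gaussSeq A l i j

lemma gaussSeq_top {n : ℕ} (A : Matrix (Fin n) (Fin n) ℚ) : gaussSeq A n = entries A := by
  simp [gaussSeq, gaussIter]

lemma gaussSeq_succ {n : ℕ} (A : Matrix (Fin n) (Fin n) ℚ) (l : ℕ) (hl : l < n) :
    gaussSeq A l = gaussStep (gaussSeq A (l+1)) l := by
  unfold gaussSeq
  have h1 : n - l = (n - (l+1)) + 1 := by omega
  have h2 : n - 1 - (n - (l+1)) = l := by omega
  rw [h1]
  show gaussStep (gaussIter (entries A) n (n - (l+1))) (n - 1 - (n - (l+1))) = _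
  rw [h2]

open Finset

section helpers
variable (b : ℕ → ℕ → ℚ)

lemma step_row (l : ℕ) (hd : b l l ≠ 0) (i : ℕ) (hsi : b i l = b l i) (x : ℕ → ℚ) :
    (∑ t ∈ range l, gaussStep b l i t * x t)
      = (∑ t ∈ range (l+1), b i t * x t)
        - b l i / b l l * (∑ t ∈ range (l+1), b l t * x t) := by
  have h1 : (∑ t ∈ range l, gaussStep b l i t * x t)
      = (∑ t ∈ range l, b i t * x t) - b l i / b l l * (∑ t ∈ range l, b l t * x t) := by
    rw [show (∑ t ∈ range l, gaussStep b l i t * x t)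
        = ∑ t ∈ range l, (b i t * x t - b l i / b l l * (b l t * x t)) from
      Finset.sum_congr rfl (by intros; simp only [gaussStep]; ring)]
    rw [Finset.sum_sub_distrib, Finset.mul_sum]
  rw [h1, Finset.sum_range_succ, Finset.sum_range_succ]
  field_simp
  rw [hsi]; ring

lemma quad_single (m i : ℕ) (hi : i < m) :
    ∑ s ∈ range m, ∑ t ∈ range m,
      (if s = i then (1:ℚ) else 0) * b s t * (if t = i then (1:ℚ) else 0) = b i i := by
  have hinner : ∀ s, (∑ t ∈ range m,
      (if s = i then (1:ℚ) else 0) * b s t * (if t = i then (1:ℚ) else 0))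
      = if s = i then b s i else 0 := by
    intro s
    rw [Finset.sum_eq_single i]
    · by_cases h : s = i <;> simp [h]
    · intro t _ ht; simp [ht]
    · intro h; exact absurd (Finset.mem_range.2 hi) h
  simp only [hinner]
  rw [Finset.sum_eq_single i]
  · simp
  · intro t _ ht; simp [ht]
  · intro h; exact absurd (Finset.mem_range.2 hi) h

lemma step_quad (l : ℕ) (hsym : ∀ i j, i < l+1 → j < l+1 → b i j = b j i)
    (hd : b l l ≠ 0) (x : ℕ → ℚ) :
    ∑ i ∈ range l, ∑ j ∈ range l, x i * gaussStep b l i j * x j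
      = ∑ i ∈ range (l+1), ∑ j ∈ range (l+1),
          (Function.update x l (-(∑ j ∈ range l, b l j * x j) / b l l)) i * b i j *
          (Function.update x l (-(∑ j ∈ range l, b l j * x j) / b l l)) j := by
  set s := ∑ j ∈ range l, b l j * x j with hs
  set v := -s / b l l with hv
  set y := Function.update x l v with hy
  have hyx : ∀ t, t < l → y t = x t := by
    intro t ht; simp [hy, Function.update_of_ne (by omega : t ≠ l)]
  have hyl : y l = v := by simp [hy]
  -- RHS computation
  have hR : ∑ i ∈ range (l+1), ∑ j ∈ range (l+1), y i * b i j * y j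
      = (∑ i ∈ range l, ∑ j ∈ range l, x i * b i j * x j)
        + v * s + v * s + b l l * v * v := by
    rw [Finset.sum_range_succ]
    have hinner : ∀ i, i < l → ∑ j ∈ range (l+1), y i * b i j * y j
        = (∑ j ∈ range l, x i * b i j * x j) + x i * b i l * v := by
      intro i hil
      rw [Finset.sum_range_succ, hyl, hyx i hil]
      congr 1
      exact Finset.sum_congr rfl (fun j hj => by rw [hyx j (Finset.mem_range.1 hj)])
    have hlast : ∑ j ∈ range (l+1), y l * b l j * y j
        = v * s + b l l * v * v := by
      rw [Finset.sum_range_succ, hyl]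
      have : ∑ j ∈ range l, v * b l j * y j = v * s := by
        rw [hs, Finset.mul_sum]
        exact Finset.sum_congr rfl (fun j hj => by
          rw [hyx j (Finset.mem_range.1 hj)]; ring)
      rw [this]; ring
    rw [Finset.sum_congr rfl (fun i hi => hinner i (Finset.mem_range.1 hi)), hlast,
      Finset.sum_add_distrib]
    have : ∑ i ∈ range l, x i * b i l * v = v * s := by
      rw [hs, Finset.mul_sum]
      exact Finset.sum_congr rfl (fun i hi => by
        rw [hsym i l (by have := Finset.mem_range.1 hi; omega) (by omega)]; ring)
    rw [this]; ring
  -- LHS computation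
  have hL : ∑ i ∈ range l, ∑ j ∈ range l, x i * gaussStep b l i j * x j
      = (∑ i ∈ range l, ∑ j ∈ range l, x i * b i j * x j) - s * s / b l l := by
    have hinner : ∀ i, ∑ j ∈ range l, x i * gaussStep b l i j * x j
        = (∑ j ∈ range l, x i * b i j * x j) - (b l i * x i) * s / b l l := by
      intro i
      rw [show (∑ j ∈ range l, x i * gaussStep b l i j * x j)
          = ∑ j ∈ range l, (x i * b i j * x j - (b l i * x i) / b l l * (b l j * x j)) from
        Finset.sum_congr rfl (by intros; simp only [gaussStep]; ring)]
      rw [Finset.sum_sub_distrib]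
      congr 1
      rw [show (∑ j ∈ range l, b l i * x i / b l l * (b l j * x j))
          = (b l i * x i / b l l) * ∑ j ∈ range l, b l j * x j from by rw [Finset.mul_sum],
        ← hs]
      ring
    rw [Finset.sum_congr rfl (fun i _ => hinner i), Finset.sum_sub_distrib]
    congr 1
    rw [show (∑ i ∈ range l, b l i * x i * s / b l l)
        = ∑ i ∈ range l, (s / b l l) * (b l i * x i) from
      Finset.sum_congr rfl (by intros; ring), ← Finset.mul_sum, ← hs]
    ring
  rw [hL, hR, hv]
  field_simp
  ring
end helpers

section inv
open Finset
variable {n : ℕ} (A : Matrix (Fin n) (Fin n) ℚ)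

def GProp (l : ℕ) : Prop :=
  (∀ i j, i < l → j < l → gaussSeq A l i j = gaussSeq A l j i) ∧
  (∀ i j, i < l → j < l → i ≠ j → 0 ≤ gaussSeq A l i j) ∧
  (∀ x : ℕ → ℚ, (∃ i, i < l ∧ x i ≠ 0) →
    ∑ i ∈ range l, ∑ j ∈ range l, x i * gaussSeq A l i j * x j < 0)

lemma GProp_diag {l : ℕ} (h : GProp A l) {i : ℕ} (hi : i < l) : gaussSeq A l i i < 0 := by
  have := h.2.2 (fun t => if t = i then (1:ℚ) else 0) ⟨i, hi, by simp⟩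
  rwa [quad_single _ l i hi] at this

lemma GProp_top (hsym : ∀ i j, A i j = A j i) (hoff : ∀ i j, i ≠ j → 0 ≤ A i j)
    (hneg : NegDefQ A) : GProp A n := by
  refine ⟨?_, ?_, ?_⟩
  · intro i j hi hj; simp [gaussSeq_top, entries, hi, hj, hsym ⟨i, hi⟩ ⟨j, hj⟩]
  · intro i j hi hj hij
    have : (⟨i, hi⟩ : Fin n) ≠ ⟨j, hj⟩ := by simp [Fin.ext_iff, hij]
    simp [gaussSeq_top, entries, hi, hj]
    exact hoff _ _ this
  · intro x ⟨i, hi, hx⟩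
    have key : ∑ i ∈ range n, ∑ j ∈ range n, x i * gaussSeq A n i j * x j
        = ∑ i : Fin n, ∑ j : Fin n, x i * A i j * x j := by
      rw [gaussSeq_top]
      rw [← Fin.sum_univ_eq_sum_range (fun i => ∑ j ∈ range n, x i * entries A i j * x j) n]
      refine Finset.sum_congr rfl fun i _ => ?_
      rw [← Fin.sum_univ_eq_sum_range (fun j => x i * entries A i j * x j) n]
      refine Finset.sum_congr rfl fun j _ => ?_
      simp [entries, i.isLt, j.isLt]
    rw [key]
    have hy : (fun t : Fin n => (x t : ℝ)) ≠ 0 := by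
      intro h
      have := congrFun h ⟨i, hi⟩
      simp only [Pi.zero_apply, Rat.cast_eq_zero] at this
      exact hx this
    have := hneg _ hy
    have hcast : ((∑ i : Fin n, ∑ j : Fin n, x i * A i j * x j : ℚ) : ℝ)
        = ∑ i : Fin n, ∑ j : Fin n, (x i : ℝ) * (A i j : ℝ) * (x j : ℝ) := by
      push_cast; rfl
    have hlt : ((∑ i : Fin n, ∑ j : Fin n, x i * A i j * x j : ℚ) : ℝ) < 0 := by
      rw [hcast]; exact this
    exact_mod_cast hlt

lemma GProp_step {l : ℕ} (hl2 : 2 ≤ l) (hln : l < n) (h : GProp A (l+1)) : GProp A l := by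
  obtain ⟨hsym, hoff, hnd⟩ := h
  have hd : gaussSeq A (l+1) l l < 0 := GProp_diag A ⟨hsym, hoff, hnd⟩ (by omega)
  have hd' : gaussSeq A (l+1) l l ≠ 0 := ne_of_lt hd
  have hstep := gaussSeq_succ A l hln
  refine ⟨?_, ?_, ?_⟩
  · intro i j hi hj
    rw [hstep]; simp only [gaussStep]
    rw [hsym i j (by omega) (by omega)]; ring
  · intro i j hi hj hij
    rw [hstep]; simp only [gaussStep]
    have h1 : 0 ≤ gaussSeq A (l+1) i j := hoff i j (by omega) (by omega) hij
    have h2 : 0 ≤ gaussSeq A (l+1) l i := hoff l i (by omega) (by omega) (by omega)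
    have h3 : 0 ≤ gaussSeq A (l+1) l j := hoff l j (by omega) (by omega) (by omega)
    have : gaussSeq A (l+1) l i * gaussSeq A (l+1) l j / gaussSeq A (l+1) l l ≤ 0 :=
      div_nonpos_of_nonneg_of_nonpos (mul_nonneg h2 h3) (le_of_lt hd)
    linarith
  · intro x ⟨i, hi, hx⟩
    rw [hstep, step_quad (gaussSeq A (l+1)) l (fun i j hi hj => hsym i j hi hj) hd' x]
    refine hnd _ ⟨i, by omega, ?_⟩
    rw [Function.update_of_ne (by omega : i ≠ l)]
    exact hx

lemma GProp_all (hn : 2 ≤ n) (hsym : ∀ i j, A i j = A j i) (hoff : ∀ i j, i ≠ j → 0 ≤ A i j)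
    (hneg : NegDefQ A) : ∀ l, 2 ≤ l → l ≤ n → GProp A l := by
  have key : ∀ k, k ≤ n - 2 → GProp A (n - k) := by
    intro k
    induction k with
    | zero => intro _; simpa using GProp_top A hsym hoff hneg
    | succ k ih =>
      intro hk
      have h1 : GProp A (n - k) := ih (by omega)
      have h2 : n - (k+1) + 1 = n - k := by omega
      refine GProp_step A (by omega) (by omega) ?_
      rw [h2]; exact h1
  intro l hl2 hln
  have : l = n - (n - l) := by omega
  rw [this]; exact key (n - l) (by omega)
end inv

section transfer
open Finset
variable {n : ℕ} (A : Matrix (Fin n) (Fin n) ℚ)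

lemma row_le (hn : 2 ≤ n) (hG : ∀ l, 2 ≤ l → l ≤ n → GProp A l) :
    ∀ l, 2 ≤ l → l ≤ n → ∀ x : ℕ → ℚ,
      (∀ k, k < n → ∑ t ∈ range n, entries A k t * x t ≤ 0) →
      ∀ i, i < l → ∑ t ∈ range l, gaussSeq A l i t * x t ≤ 0 := by
  have key : ∀ k, k ≤ n - 2 → ∀ x : ℕ → ℚ,
      (∀ k', k' < n → ∑ t ∈ range n, entries A k' t * x t ≤ 0) →
      ∀ i, i < n - k → ∑ t ∈ range (n-k), gaussSeq A (n-k) i t * x t ≤ 0 := by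
    intro k
    induction k with
    | zero =>
      intro _ x hx i hi
      simpa [gaussSeq_top] using hx i (by omega)
    | succ k ih =>
      intro hk x hx i hi
      set l := n - (k+1) with hldef
      have h2 : l + 1 = n - k := by omega
      have hGl : GProp A (l+1) := by rw [h2]; exact hG _ (by omega) (by omega)
      have hd : gaussSeq A (l+1) l l < 0 := GProp_diag A hGl (by omega)
      have hstep := gaussSeq_succ A l (by omega)
      have hsi : gaussSeq A (l+1) i l = gaussSeq A (l+1) l i :=
        hGl.1 i l (by omega) (by omega)
      have hrow := step_row (gaussSeq A (l+1)) l (ne_of_lt hd) i hsi x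
      rw [hstep]
      show ∑ t ∈ range l, gaussStep (gaussSeq A (l+1)) l i t * x t ≤ 0
      rw [hrow]
      have hR1 : ∑ t ∈ range (l+1), gaussSeq A (l+1) i t * x t ≤ 0 := by
        have := ih (by omega) x hx i (by omega)
        rwa [← h2] at this
      have hRl : ∑ t ∈ range (l+1), gaussSeq A (l+1) l t * x t ≤ 0 := by
        have := ih (by omega) x hx l (by omega)
        rwa [← h2] at this
      have hq : gaussSeq A (l+1) l i / gaussSeq A (l+1) l l ≤ 0 := by
        refine div_nonpos_of_nonneg_of_nonpos ?_ (le_of_lt hd)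
        exact hGl.2.1 l i (by omega) (by omega) (by omega)
      nlinarith
  intro l hl2 hln x hx i hi
  have hl : l = n - (n - l) := by omega
  rw [hl]
  exact key (n - l) (by omega) x hx i (by omega : i < n - (n - l))

lemma extend (hn : 2 ≤ n) (hG : ∀ l, 2 ≤ l → l ≤ n → GProp A l) :
    ∀ m, ∀ l, 2 ≤ l → l ≤ n → n - l ≤ m → ∀ x : ℕ → ℚ,
      (∀ t, t < l → 0 < x t) →
      (∀ i, i < l → ∑ t ∈ range l, gaussSeq A l i t * x t < 0) →
      ∃ y : ℕ → ℚ, (∀ t, t < n → 0 < y t) ∧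
        (∀ i, i < n → ∑ t ∈ range n, entries A i t * y t < 0) ∧
        y 0 = x 0 ∧ y 1 = x 1 := by
  intro m
  induction m with
  | zero =>
    intro l hl2 hln hm x hpos hrow
    have : l = n := by omega
    subst this
    exact ⟨x, hpos, by simpa [gaussSeq_top] using hrow, rfl, rfl⟩
  | succ m ih =>
    intro l hl2 hln hm x hpos hrow
    rcases eq_or_lt_of_le hln with heq | hlt
    · subst heq
      exact ⟨x, hpos, by simpa [gaussSeq_top] using hrow, rfl, rfl⟩
    · -- construct extension to level l+1
      have hGl : GProp A (l+1) := hG _ (by omega) (by omega)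
      set b := gaussSeq A (l+1) with hb
      have hd : b l l < 0 := GProp_diag A hGl (by omega)
      have hbne : b l l ≠ 0 := ne_of_lt hd
      have hstep := gaussSeq_succ A l hlt
      set s := ∑ t ∈ range l, b l t * x t with hs
      have hsnn : 0 ≤ s := by
        refine Finset.sum_nonneg fun t ht => ?_
        have ht' := Finset.mem_range.1 ht
        exact mul_nonneg (hGl.2.1 l t (by omega) (by omega) (by omega))
          (le_of_lt (hpos t ht'))
      set Msum := 1 + ∑ i ∈ range l, b l i with hMsum
      have hMpos : 0 < Msum := by
        have h0 : (0:ℚ) ≤ ∑ i ∈ range l, b l i := Finset.sum_nonneg fun t ht => by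
          have := Finset.mem_range.1 ht
          exact hGl.2.1 l t (by omega) (by omega) (by omega)
        rw [hMsum]; linarith
      have hne : (range l).Nonempty := Finset.nonempty_range_iff.2 (by omega)
      set m0 := (range l).inf' hne
        (fun i => -(∑ t ∈ range l, gaussSeq A l i t * x t)) with hm0
      have hm0pos : 0 < m0 := by
        rw [hm0, Finset.lt_inf'_iff]
        intro i hi
        have := hrow i (Finset.mem_range.1 hi)
        linarith
      have hm0le : ∀ i, i < l → ∑ t ∈ range l, gaussSeq A l i t * x t ≤ -m0 := by
        intro i hi
        have h' : m0 ≤ -(∑ t ∈ range l, gaussSeq A l i t * x t) := by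
          rw [hm0]; exact Finset.inf'_le _ (Finset.mem_range.2 hi)
        linarith
      set ε := m0 / (2 * Msum) with hε
      have hεpos : 0 < ε := div_pos hm0pos (by linarith)
      set v := -s / b l l + ε with hv
      have hvpos : 0 < v := by
        have h0 : 0 ≤ -s / b l l := by
          rw [neg_div]
          have := div_nonpos_of_nonneg_of_nonpos hsnn (le_of_lt hd)
          linarith
        rw [hv]; linarith
      set y := Function.update x l v with hy
      have hyx : ∀ t, t < l → y t = x t := fun t ht => by
        simp [hy, Function.update_of_ne (by omega : t ≠ l)]
      have hyl : y l = v := by rw [hy]; simp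
      have hRly : ∑ t ∈ range (l+1), b l t * y t = b l l * ε := by
        rw [Finset.sum_range_succ, hyl]
        have h1 : ∑ t ∈ range l, b l t * y t = s := by
          rw [hs]
          exact Finset.sum_congr rfl fun t ht => by rw [hyx t (Finset.mem_range.1 ht)]
        rw [h1, hv, mul_add, mul_comm (b l l) (-s / b l l), div_mul_cancel₀ _ hbne]
        ring
      have hrows : ∀ i, i < l + 1 → ∑ t ∈ range (l+1), b i t * y t < 0 := by
        intro i hi
        rcases eq_or_lt_of_le (Nat.lt_succ_iff.1 hi) with heq | hilt
        · subst heq; rw [hRly]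
          exact mul_neg_of_neg_of_pos hd hεpos
        · have hsi : b i l = b l i := hGl.1 i l (by omega) (by omega)
          have hrw := step_row b l (ne_of_lt hd) i hsi y
          have hL : ∑ t ∈ range l, gaussStep b l i t * y t
              = ∑ t ∈ range l, gaussSeq A l i t * x t := by
            refine Finset.sum_congr rfl fun t ht => ?_
            rw [hyx t (Finset.mem_range.1 ht), hstep]
          rw [hL, hRly] at hrw
          have : ∑ t ∈ range (l+1), b i t * y t
              = (∑ t ∈ range l, gaussSeq A l i t * x t) + b l i * ε := by
            have hcancel : b l i / b l l * (b l l * ε) = b l i * ε := by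
              rw [div_mul_eq_mul_div, mul_comm (b l l) ε, ← mul_assoc, mul_div_assoc,
                div_self hbne, mul_one]
            linarith [hrw, hcancel]
          rw [this]
          have h1 : ∑ t ∈ range l, gaussSeq A l i t * x t ≤ -m0 := hm0le i hilt
          have h2 : b l i ≤ Msum := by
            rw [hMsum]
            have := Finset.single_le_sum (f := fun t => b l t)
              (fun t ht => hGl.2.1 l t (by omega)
                (by have := Finset.mem_range.1 ht; omega)
                (by have := Finset.mem_range.1 ht; omega))
              (Finset.mem_range.2 hilt)
            linarith
          have h3 : b l i * ε ≤ Msum * ε :=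
            mul_le_mul_of_nonneg_right h2 (le_of_lt hεpos)
          have h4 : Msum * ε = m0 / 2 := by
            rw [hε]; field_simp
          have h5 : b l i * ε ≤ m0 / 2 := h4 ▸ h3
          linarith [h1, h5, hm0pos]
      have hypos : ∀ t, t < l + 1 → 0 < y t := by
        intro t ht
        rcases eq_or_lt_of_le (Nat.lt_succ_iff.1 ht) with heq | htlt
        · subst heq; rw [hyl]; exact hvpos
        · rw [hyx t htlt]; exact hpos t htlt
      obtain ⟨z, hz1, hz2, hz3, hz4⟩ := ih (l+1) (by omega) (by omega) (by omega) y hypos hrows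
      refine ⟨z, hz1, hz2, ?_, ?_⟩
      · rw [hz3, hyx 0 (by omega)]
      · rw [hz4, hyx 1 (by omega)]
end transfer

section finish
open Finset

lemma two_dim (a b c : ℚ) (ha : a < 0) (hc : c < 0) (hb : 0 ≤ b)
    (hdet : b * b < a * c) (h : b < -a) :
    ∃ u w : ℚ, 0 < u ∧ 0 < w ∧ u < w ∧ a * u + b * w < 0 ∧ b * u + c * w < 0 := by
  rcases eq_or_lt_of_le hb with hb0 | hbpos
  · exact ⟨1, 2, by norm_num, by norm_num, by norm_num,
      by rw [← hb0]; linarith, by rw [← hb0]; linarith⟩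
  · have hcpos : 0 < -c := by linarith
    have h1a : (1:ℚ) < -a / b := (one_lt_div hbpos).2 h
    have h1b : b / -c < -a / b := by
      rw [div_lt_div_iff₀ hcpos hbpos]
      nlinarith
    have hmax : max 1 (b / -c) < -a / b := max_lt h1a h1b
    set r := (max 1 (b / -c) + -a / b) / 2 with hr
    have hr1 : max 1 (b / -c) < r := by rw [hr]; linarith
    have hr2 : r < -a / b := by rw [hr]; linarith
    have h1r : 1 < r := lt_of_le_of_lt (le_max_left _ _) hr1
    have hcr : b / -c < r := lt_of_le_of_lt (le_max_right _ _) hr1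
    refine ⟨1, r, by norm_num, by linarith, h1r, ?_, ?_⟩
    · have : r * b < -a := (lt_div_iff₀ hbpos).1 hr2
      nlinarith
    · have : b < r * -c := (div_lt_iff₀ hcpos).1 hcr
      nlinarith

lemma int_scale (q : ℚ) (m : ℕ) (hdvd : q.den ∣ m) :
    ((q * m).num : ℚ) = q * m := by
  obtain ⟨k, hk⟩ := hdvd
  have hden : ((q.den : ℚ)) ≠ 0 := by
    exact_mod_cast q.den_ne_zero
  have h1 : q * (q.den : ℚ) = (q.num : ℚ) := by
    nth_rewrite 1 [← Rat.num_div_den q]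
    exact div_mul_cancel₀ _ hden
  have key : q * (m : ℚ) = ((q.num * (k:ℤ) : ℤ) : ℚ) := by
    rw [hk]
    push_cast
    rw [← mul_assoc, h1]
  rw [key, Rat.num_intCast]

lemma sum_fin_range {n : ℕ} (A : Matrix (Fin n) (Fin n) ℚ) (k : Fin n) (x : ℕ → ℚ) :
    ∑ t : Fin n, A k t * x t.val = ∑ t ∈ range n, entries A k t * x t := by
  rw [← Fin.sum_univ_eq_sum_range (fun t => entries A k t * x t) n]
  refine Finset.sum_congr rfl fun t _ => ?_
  simp [entries, t.isLt, k.isLt]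

lemma realize {n : ℕ} (hn : 2 ≤ n) (A : Matrix (Fin n) (Fin n) ℚ) (y : ℕ → ℚ)
    (hpos : ∀ t, t < n → 0 < y t)
    (hrow : ∀ k, k < n → ∑ t ∈ range n, entries A k t * y t < 0)
    (C : Fin n → ℚ) (hC : ∀ k, C k ≤ 0) :
    ∃ X : Fin n → ℤ, (∀ k, 0 < X k) ∧ (∀ k, ∑ t, A k t * (X t : ℚ) ≤ C k) ∧
      (∀ s t : Fin n, y s.val < y t.val → X s < X t) := by
  set D : ℕ := ∏ t ∈ range n, (y t).den with hD
  have hDpos : 0 < D := Finset.prod_pos fun t _ => (y t).pos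
  set z : ℕ → ℤ := fun t => (y t * D).num with hz
  have hzc : ∀ t, t < n → ((z t : ℚ)) = y t * D := by
    intro t ht
    exact int_scale (y t) D (Finset.dvd_prod_of_mem _ (Finset.mem_range.2 ht))
  have hzpos : ∀ t, t < n → 0 < z t := by
    intro t ht
    have : (0:ℚ) < (z t : ℚ) := by
      rw [hzc t ht]
      exact mul_pos (hpos t ht) (by exact_mod_cast hDpos)
    exact_mod_cast this
  have hq : ∀ k, k < n → ∑ t ∈ range n, entries A k t * (z t : ℚ) < 0 := by
    intro k hk
    have : ∑ t ∈ range n, entries A k t * (z t : ℚ)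
        = (∑ t ∈ range n, entries A k t * y t) * D := by
      rw [Finset.sum_mul]
      exact Finset.sum_congr rfl fun t ht => by
        rw [hzc t (Finset.mem_range.1 ht)]; ring
    rw [this]
    exact mul_neg_of_neg_of_pos (hrow k hk) (by exact_mod_cast hDpos)
  have huniv : (Finset.univ : Finset (Fin n)).Nonempty :=
    ⟨⟨0, by omega⟩, Finset.mem_univ _⟩
  set T := Finset.univ.sup' huniv
    (fun k : Fin n => C k / (∑ t ∈ range n, entries A k t * (z t : ℚ))) with hT
  set M : ℤ := max 1 ⌈T⌉ with hM
  have hM1 : 1 ≤ M := le_max_left _ _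
  have hMT : T ≤ (M : ℚ) := by
    calc T ≤ (⌈T⌉ : ℚ) := Int.le_ceil T
    _ ≤ (M : ℚ) := by exact_mod_cast le_max_right 1 ⌈T⌉
  refine ⟨fun k => M * z k.val, ?_, ?_, ?_⟩
  · intro k
    exact mul_pos (by omega) (hzpos k.val k.isLt)
  · intro k
    have hsum : ∑ t : Fin n, A k t * ((M * z t.val : ℤ) : ℚ)
        = (M : ℚ) * ∑ t ∈ range n, entries A k t * (z t : ℚ) := by
      rw [← sum_fin_range A k (fun t => (z t : ℚ)), Finset.mul_sum]
      exact Finset.sum_congr rfl fun t _ => by push_cast; ring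
    rw [hsum]
    set qk := ∑ t ∈ range n, entries A k t * (z t : ℚ) with hqk
    have hqkneg : qk < 0 := hq k.val k.isLt
    have hTk : C k / qk ≤ T := by
      rw [hT]
      exact Finset.le_sup'
        (fun k : Fin n => C k / (∑ t ∈ range n, entries A k t * (z t : ℚ)))
        (Finset.mem_univ k)
    have : (M:ℚ) * qk ≤ (C k / qk) * qk := by
      have := hTk.trans hMT
      exact mul_le_mul_of_nonpos_right this (le_of_lt hqkneg)
    rwa [div_mul_cancel₀ _ (ne_of_lt hqkneg)] at this
  · intro s t hst
    have : z s.val < z t.val := by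
      have h1 : (z s.val : ℚ) < (z t.val : ℚ) := by
        rw [hzc _ s.isLt, hzc _ t.isLt]
        exact mul_lt_mul_of_pos_right hst (by exact_mod_cast hDpos)
      exact_mod_cast h1
    exact mul_lt_mul_of_pos_left this (by omega)
end finish

section main
open Finset

theorem gauss_two_by_two_criterion (n : ℕ) (hn : 2 ≤ n) (A : Matrix (Fin n) (Fin n) ℚ)
    (hsym : ∀ i j, A i j = A j i) (hdiag : ∀ i, A i i < 0)
    (hoff : ∀ i j, i ≠ j → 0 ≤ A i j) (hneg : NegDefQ A)
    (C : Fin n → ℚ) (hC : ∀ k, C k ≤ 0) :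
    ((∃ X : Fin n → ℤ, (∀ k, 0 < X k) ∧ (∀ k, ∑ t, A k t * (X t : ℚ) ≤ C k) ∧
        X ⟨0, by omega⟩ < X ⟨1, by omega⟩) ↔
      gaussSeq A 2 0 1 < -(gaussSeq A 2 0 0)) ∧
    ((∃ X : Fin n → ℤ, (∀ k, 0 < X k) ∧ (∀ k, ∑ t, A k t * (X t : ℚ) ≤ C k) ∧
        X ⟨1, by omega⟩ < X ⟨0, by omega⟩) ↔
      gaussSeq A 2 0 1 < -(gaussSeq A 2 1 1)) := by
  have hG : ∀ l, 2 ≤ l → l ≤ n → GProp A l := GProp_all A hn hsym hoff hneg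
  have G2 : GProp A 2 := hG 2 le_rfl hn
  set a := gaussSeq A 2 0 0 with hadef
  set b := gaussSeq A 2 0 1 with hbdef
  set c := gaussSeq A 2 1 1 with hcdef
  have ha : a < 0 := GProp_diag A G2 (by norm_num)
  have hc : c < 0 := GProp_diag A G2 (by norm_num)
  have hb : 0 ≤ b := G2.2.1 0 1 (by norm_num) (by norm_num) (by norm_num)
  have hsym10 : gaussSeq A 2 1 0 = b := G2.1 1 0 (by norm_num) (by norm_num)
  -- determinant positivity
  have hdet : b * b < a * c := by
    set x : ℕ → ℚ := fun t => if t = 0 then -c else if t = 1 then b else 0 with hx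
    have hnz : x 0 ≠ 0 := by simp [hx]; linarith
    have hq := G2.2.2 x ⟨0, by norm_num, hnz⟩
    simp only [Finset.sum_range_succ, Finset.sum_range_zero, zero_add] at hq
    rw [hsym10] at hq
    simp only [hx] at hq
    norm_num at hq
    nlinarith [hq, hc]
  -- forward direction helper
  have fwd : ∀ X : Fin n → ℤ, (∀ k, 0 < X k) → (∀ k, ∑ t, A k t * (X t : ℚ) ≤ C k) →
      (a * (X ⟨0, by omega⟩ : ℚ) + b * (X ⟨1, by omega⟩ : ℚ) ≤ 0 ∧
       b * (X ⟨0, by omega⟩ : ℚ) + c * (X ⟨1, by omega⟩ : ℚ) ≤ 0) := by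
    intro X hXpos hXrow
    set x : ℕ → ℚ := fun t => if h : t < n then ((X ⟨t, h⟩ : ℤ) : ℚ) else 0 with hx
    have hrows : ∀ k, k < n → ∑ t ∈ range n, entries A k t * x t ≤ 0 := by
      intro k hk
      have heq : ∑ t ∈ range n, entries A k t * x t
          = ∑ t : Fin n, A ⟨k, hk⟩ t * ((X t : ℤ) : ℚ) := by
        rw [← sum_fin_range A ⟨k, hk⟩ x]
        exact Finset.sum_congr rfl fun t _ => by simp [hx, t.isLt]
      rw [heq]
      exact le_trans (hXrow ⟨k, hk⟩) (hC ⟨k, hk⟩)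
    have h0 := row_le A hn hG 2 le_rfl hn x hrows 0 (by norm_num)
    have h1 := row_le A hn hG 2 le_rfl hn x hrows 1 (by norm_num)
    simp only [Finset.sum_range_succ, Finset.sum_range_zero, zero_add] at h0 h1
    rw [hsym10] at h1
    have hx0 : x 0 = ((X ⟨0, by omega⟩ : ℤ) : ℚ) := by
      simp only [hx]; rw [dif_pos (by omega : (0:ℕ) < n)]
    have hx1 : x 1 = ((X ⟨1, by omega⟩ : ℤ) : ℚ) := by
      simp only [hx]; rw [dif_pos (by omega : (1:ℕ) < n)]
    rw [hx0, hx1] at h0 h1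
    exact ⟨h0, h1⟩
  -- backward direction helper
  have bwd : ∀ u w : ℚ, 0 < u → 0 < w →
      a * u + b * w < 0 → b * u + c * w < 0 →
      ∃ X : Fin n → ℤ, (∀ k, 0 < X k) ∧ (∀ k, ∑ t, A k t * (X t : ℚ) ≤ C k) ∧
        (u < w → X ⟨0, by omega⟩ < X ⟨1, by omega⟩) ∧
        (w < u → X ⟨1, by omega⟩ < X ⟨0, by omega⟩) := by
    intro u w hu hw hr0 hr1
    set x : ℕ → ℚ := fun t => if t = 0 then u else if t = 1 then w else 0 with hx
    have hxpos : ∀ t, t < 2 → 0 < x t := by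
      intro t ht
      interval_cases t <;> simpa [hx]
    have hxrow : ∀ i, i < 2 → ∑ t ∈ range 2, gaussSeq A 2 i t * x t < 0 := by
      intro i hi
      interval_cases i <;>
        simp only [Finset.sum_range_succ, Finset.sum_range_zero, zero_add, hx] <;>
        norm_num
      · exact hr0
      · rw [hsym10]; exact hr1
    obtain ⟨y, hy1, hy2, hy3, hy4⟩ :=
      extend A hn hG (n - 2) 2 le_rfl hn (by omega) x hxpos hxrow
    obtain ⟨X, hX1, hX2, hX3⟩ := realize hn A y hy1 hy2 C hC
    refine ⟨X, hX1, hX2, ?_, ?_⟩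
    · intro huw
      apply hX3
      show y 0 < y 1
      rw [hy3, hy4]; simpa [hx] using huw
    · intro hwu
      apply hX3
      show y 1 < y 0
      rw [hy3, hy4]; simpa [hx] using hwu
  constructor
  · constructor
    · rintro ⟨X, hXpos, hXrow, hXlt⟩
      obtain ⟨h0, _⟩ := fwd X hXpos hXrow
      have hx0 : (0:ℚ) < ((X ⟨0, by omega⟩ : ℤ) : ℚ) := by exact_mod_cast hXpos _
      have hx1 : (0:ℚ) < ((X ⟨1, by omega⟩ : ℤ) : ℚ) := by exact_mod_cast hXpos _
      have hlt : ((X ⟨0, by omega⟩ : ℤ) : ℚ) < ((X ⟨1, by omega⟩ : ℤ) : ℚ) := by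
        exact_mod_cast hXlt
      nlinarith [h0, hx1, hlt, ha]
    · intro hcond
      obtain ⟨u, w, hu, hw, huw, h1, h2⟩ := two_dim a b c ha hc hb hdet hcond
      obtain ⟨X, hX1, hX2, hX3, _⟩ := bwd u w hu hw h1 h2
      exact ⟨X, hX1, hX2, hX3 huw⟩
  · constructor
    · rintro ⟨X, hXpos, hXrow, hXlt⟩
      obtain ⟨_, h1⟩ := fwd X hXpos hXrow
      have hx0 : (0:ℚ) < ((X ⟨0, by omega⟩ : ℤ) : ℚ) := by exact_mod_cast hXpos _
      have hx1 : (0:ℚ) < ((X ⟨1, by omega⟩ : ℤ) : ℚ) := by exact_mod_cast hXpos _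
      have hlt : ((X ⟨1, by omega⟩ : ℤ) : ℚ) < ((X ⟨0, by omega⟩ : ℤ) : ℚ) := by
        exact_mod_cast hXlt
      nlinarith [h1, hx0, hlt, hc]
    · intro hcond
      obtain ⟨u, w, hu, hw, huw, h1, h2⟩ :=
        two_dim c b a hc ha hb (by nlinarith [hdet]) hcond
      -- h1 : c * u + b * w < 0, h2 : b * u + a * w < 0
      obtain ⟨X, hX1, hX2, _, hX4⟩ := bwd w u hw hu (by linarith) (by linarith)
      exact ⟨X, hX1, hX2, hX4 huw⟩
end main
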